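/- If Ψ is a locally small and sound class of weights (over Set), then its saturation Ψ* — the class of all weights φ : Eᵒᵖ ⥤ Set that lie in Ψ(E) — is again locally small and sound. -/

import Mathlib

open CategoryTheory CategoryTheory.Limits Opposite
namespace Paper
abbrev elCat {E : Type} [SmallCategory E] (φ : Eᵒᵖ ⥤ Type) : Type :=
  (Functor.Elements φ)ᵒᵖ
def elProj {E : Type} [SmallCategory E] (φ : Eᵒᵖ ⥤ Type) : elCat φ ⥤ E :=
  (CategoryOfElements.π φ).leftOp
noncomputable def wColim {E : Type} [SmallCategory E] (φ : Eᵒᵖ ⥤ Type) :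
    (E ⥤ Type) ⥤ Type :=
  (Functor.whiskeringLeft (elCat φ) E Type).obj (elProj φ) ⋙ colim
def wLim {D E : Type} [SmallCategory D] [SmallCategory E]
    (ψ : Dᵒᵖ ⥤ Type) (G : Dᵒᵖ ⥤ E ⥤ Type) : E ⥤ Type :=
  G.flip ⋙ coyoneda.obj (op ψ)
def wLimEval {D E : Type} [SmallCategory D] [SmallCategory E]
    (ψ : Dᵒᵖ ⥤ Type) (G : Dᵒᵖ ⥤ E ⥤ Type) (d : Dᵒᵖ) (y : ψ.obj d) :
    wLim ψ G ⟶ G.obj d where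
  app _ := TypeCat.ofHom fun α => α.app d y
  naturality _ _ _ := rfl
def wLimComparison {D E : Type} [SmallCategory D] [SmallCategory E]
    (H : (E ⥤ Type) ⥤ Type) (ψ : Dᵒᵖ ⥤ Type) (G : Dᵒᵖ ⥤ E ⥤ Type) :
    H.obj (wLim ψ G) → (ψ ⟶ G ⋙ H) := fun z =>
  { app := fun d => TypeCat.ofHom fun y => H.map (wLimEval ψ G d y) z
    naturality := fun d d' g => by
      ext y
      have h : wLimEval ψ G d' (ψ.map g y) = wLimEval ψ G d y ≫ G.map g := by
        ext e α
        exact ConcreteCategory.congr_hom (α.naturality g) y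
      change H.map (wLimEval ψ G d' (ψ.map g y)) z = H.map (G.map g) (H.map (wLimEval ψ G d y) z)
      rw [h, H.map_comp]
      rfl }
structure Weight : Type 1 where
  D : Type
  [instD : SmallCategory D]
  w : Dᵒᵖ ⥤ Type
attribute [instance] Weight.instD
abbrev WeightClass : Type 1 := Weight → Prop
def IsFlat (Ψ : WeightClass) {E : Type} [SmallCategory E] (φ : Eᵒᵖ ⥤ Type) : Prop :=
  ∀ W : Weight, Ψ W → ∀ G : W.Dᵒᵖ ⥤ E ⥤ Type,
    Function.Bijective (wLimComparison (wColim φ) W.w G)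
def IsSound (Ψ : WeightClass) : Prop :=
  ∀ (E : Type) [SmallCategory E] (φ : Eᵒᵖ ⥤ Type),
    (∀ W : Weight, Ψ W → ∀ T : W.D ⥤ E,
      Function.Bijective (wLimComparison (wColim φ) W.w (T.op ⋙ coyoneda))) →
    IsFlat Ψ φ

/-- Given a weighted cone `p : ψ ⟶ T(L, G −)` on a diagram `G : Dᵒᵖ ⥤ T` with
vertex `L`, and a functor `φ : T ⥤ Set`, the induced map `φ(L) → Nat(ψ, φ ∘ G)`. -/
def wConeMap {D T : Type} [SmallCategory D] [SmallCategory T]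
    (ψ : Dᵒᵖ ⥤ Type) (G : Dᵒᵖ ⥤ T) (L : T)
    (p : ψ ⟶ G ⋙ coyoneda.obj (op L)) (φ : T ⥤ Type) (z : φ.obj L) :
    ψ ⟶ G ⋙ φ where
  app d := TypeCat.ofHom fun y => φ.map (p.app d y) z
  naturality d d' g := by
    ext y
    have h := ConcreteCategory.congr_hom (p.naturality g) y
    dsimp at h ⊢
    rw [h, φ.map_comp]
    rfl

/-- `p : ψ ⟶ T(L, G −)` exhibits `L` as the `ψ`-weighted limit of `G`:
the induced maps `T(X, L) → Nat(ψ, T(X, G −))` are bijections. -/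
def IsWLimCone {D T : Type} [SmallCategory D] [SmallCategory T]
    (ψ : Dᵒᵖ ⥤ Type) (G : Dᵒᵖ ⥤ T) (L : T)
    (p : ψ ⟶ G ⋙ coyoneda.obj (op L)) : Prop :=
  ∀ X : T, Function.Bijective (wConeMap ψ G L p (coyoneda.obj (op X)))

/-- A `Ψ`-theory: a small category with `ψ`-weighted limits for all `ψ` in `Ψ`. -/
def IsPsiTheory (Ψ : WeightClass) (T : Type) [SmallCategory T] : Prop :=
  ∀ W : Weight, Ψ W → ∀ G : W.Dᵒᵖ ⥤ T,
    ∃ (L : T) (p : W.w ⟶ G ⋙ coyoneda.obj (op L)), IsWLimCone W.w G L p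

/-- A functor `φ : T ⥤ Set` preserves `Ψ`-limits. -/
def PreservesPsiLimits (Ψ : WeightClass) {T : Type} [SmallCategory T]
    (φ : T ⥤ Type) : Prop :=
  ∀ W : Weight, Ψ W → ∀ (G : W.Dᵒᵖ ⥤ T) (L : T)
    (p : W.w ⟶ G ⋙ coyoneda.obj (op L)), IsWLimCone W.w G L p →
    Function.Bijective (wConeMap W.w G L p φ)

/-- The pointwise `γ`-weighted colimit of a diagram `H : J ⥤ [T, Set]`:
`(Colim_γ H)(t) = Colim_γ (j ↦ H(j)(t))`. -/
noncomputable def pointwiseWColim {J T : Type} [SmallCategory J] [SmallCategory T]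
    (γ : Jᵒᵖ ⥤ Type) (H : J ⥤ T ⥤ Type) : T ⥤ Type :=
  H.flip ⋙ wColim γ

/-- `Ψ⁺(Tᵒᵖ)`: the smallest replete full subcategory of `[T, Set]` containing the
representables and closed under `γ`-weighted colimits for all `Ψ`-flat weights `γ`. -/
inductive PsiPlusClosure (Ψ : WeightClass) (T : Type) [SmallCategory T] :
    (T ⥤ Type) → Prop
  | rep (t : T) : PsiPlusClosure Ψ T (coyoneda.obj (op t))
  | iso {F G : T ⥤ Type} : PsiPlusClosure Ψ T F → Nonempty (F ≅ G) →
      PsiPlusClosure Ψ T G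
  | wcolim (W : Weight) (hW : IsFlat Ψ W.w) (H : W.D ⥤ T ⥤ Type)
      (hH : ∀ j : W.D, PsiPlusClosure Ψ T (H.obj j)) :
      PsiPlusClosure Ψ T (pointwiseWColim W.w H)

/-- `Ψ(D)`: the free `Ψ`-cocompletion of `D` inside `[Dᵒᵖ, Set]`, i.e. the smallest
replete full subcategory containing the representables and closed under `ψ`-weighted
colimits for `ψ` in `Ψ`. -/
inductive PsiCocompletion (Ψ : WeightClass) (D : Type) [SmallCategory D] :
    (Dᵒᵖ ⥤ Type) → Prop
  | rep (d : D) : PsiCocompletion Ψ D (yoneda.obj d)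
  | iso {F G : Dᵒᵖ ⥤ Type} : PsiCocompletion Ψ D F → Nonempty (F ≅ G) →
      PsiCocompletion Ψ D G
  | wcolim (W : Weight) (hW : Ψ W) (H : W.D ⥤ Dᵒᵖ ⥤ Type)
      (hH : ∀ j : W.D, PsiCocompletion Ψ D (H.obj j)) :
      PsiCocompletion Ψ D (pointwiseWColim W.w H)

/-- `Ψ` is locally small: each `Ψ(D)` is essentially small. -/
def IsLocallySmall (Ψ : WeightClass) : Prop :=
  ∀ (D : Type) [SmallCategory D], ∃ (ι : Type) (f : ι → (Dᵒᵖ ⥤ Type)),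
    ∀ F : Dᵒᵖ ⥤ Type, PsiCocompletion Ψ D F → ∃ i : ι, Nonempty (F ≅ f i)

/-- `Ψ` is saturated: the objects of `Ψ(D)` are, up to isomorphism, exactly the
weights `Dᵒᵖ ⥤ Set` belonging to `Ψ`. -/
def IsSaturated (Ψ : WeightClass) : Prop :=
  ∀ (D : Type) [SmallCategory D] (F : Dᵒᵖ ⥤ Type),
    PsiCocompletion Ψ D F ↔ ∃ G : Dᵒᵖ ⥤ Type, Ψ (Weight.mk D G) ∧ Nonempty (F ≅ G)

/-- The closure of `Ψ(D)` in `[Dᵒᵖ, Set]` under `γ`-weighted colimits for all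
`Ψ`-flat weights `γ`. -/
inductive FlatClosure (Ψ : WeightClass) (D : Type) [SmallCategory D] :
    (Dᵒᵖ ⥤ Type) → Prop
  | base {F : Dᵒᵖ ⥤ Type} : PsiCocompletion Ψ D F → FlatClosure Ψ D F
  | iso {F G : Dᵒᵖ ⥤ Type} : FlatClosure Ψ D F → Nonempty (F ≅ G) → FlatClosure Ψ D G
  | wcolim (W : Weight) (hW : IsFlat Ψ W.w) (H : W.D ⥤ Dᵒᵖ ⥤ Type)
      (hH : ∀ j : W.D, FlatClosure Ψ D (H.obj j)) :
      FlatClosure Ψ D (pointwiseWColim W.w H)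

/-- The saturation `Ψ*` of a class of weights `Ψ`: all weights `φ : Eᵒᵖ ⥤ Set`
that lie in the free `Ψ`-cocompletion `Ψ(E)`. -/
def saturation (Ψ : WeightClass) : WeightClass :=
  fun W => PsiCocompletion Ψ W.D W.w

section Toolkit
variable {J T : Type} [SmallCategory J] [SmallCategory T]

/-- `j ↦ (H.obj j ⟶ M)`. -/
def natHom (H : J ⥤ T ⥤ Type) (M : T ⥤ Type) : Jᵒᵖ ⥤ Type :=
  H.op ⋙ yoneda.obj M

/-- Coprojection of a pointwise weighted colimit. -/
noncomputable def coproj (γ : Jᵒᵖ ⥤ Type) (H : J ⥤ T ⥤ Type) (j : J) (x : γ.obj (op j)) :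
    H.obj j ⟶ pointwiseWColim γ H where
  app t := (colimit.ι (elProj γ ⋙ H.flip.obj t) (op (γ.elementsMk (op j) x)) :)
  naturality t t' f := by
    exact (colimit.ι_map (Functor.whiskerLeft (elProj γ) (H.flip.map f)) (op (γ.elementsMk (op j) x))).symm

lemma coproj_natural (γ : Jᵒᵖ ⥤ Type) (H : J ⥤ T ⥤ Type) {j j' : J} (u : j ⟶ j')
    (x' : γ.obj (op j')) :
    H.map u ≫ coproj γ H j' x' = coproj γ H j (γ.map u.op x') := by
  apply NatTrans.ext
  funext t
  exact (colimit.w (elProj γ ⋙ H.flip.obj t)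
    (CategoryOfElements.homMk (γ.elementsMk (op j') x') (γ.elementsMk (op j) (γ.map u.op x'))
      u.op rfl).op :)

/-- Descent / universal property of the pointwise weighted colimit. -/
noncomputable def wdesc (γ : Jᵒᵖ ⥤ Type) (H : J ⥤ T ⥤ Type) {M : T ⥤ Type}
    (α : γ ⟶ natHom H M) : pointwiseWColim γ H ⟶ M where
  app t := (colimit.desc (elProj γ ⋙ H.flip.obj t)
    { pt := M.obj t
      ι :=
        { app := fun c => (α.app c.unop.1 c.unop.2).app t
          naturality := fun c c' m => by
            have h := ConcreteCategory.congr_hom (α.naturality m.unop.1) c'.unop.2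
            have h2 : α.app c.unop.1 c.unop.2
                = H.map m.unop.1.unop ≫ α.app c'.unop.1 c'.unop.2 := by
              conv_lhs => rw [← m.unop.2]
              exact h
            ext z
            show (α.app c'.unop.1 c'.unop.2).app t ((H.map m.unop.1.unop).app t z)
                = (α.app c.unop.1 c.unop.2).app t z
            rw [h2]
            rfl } } :)
  naturality t t' f := by
    dsimp only [pointwiseWColim, wColim, Functor.comp_obj, Functor.comp_map,
      Functor.whiskeringLeft_obj_obj, Functor.whiskeringLeft_obj_map, colim_obj, colim_map]
    apply colimit.hom_ext
    intro c
    rw [← Category.assoc, ι_colimMap, Category.assoc, colimit.ι_desc, ← Category.assoc,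
      colimit.ι_desc]
    exact (α.app c.unop.1 c.unop.2).naturality f

lemma coproj_wdesc (γ : Jᵒᵖ ⥤ Type) (H : J ⥤ T ⥤ Type) {M : T ⥤ Type}
    (α : γ ⟶ natHom H M) (j : J) (x : γ.obj (op j)) :
    coproj γ H j x ≫ wdesc γ H α = α.app (op j) x := by
  apply NatTrans.ext
  funext t
  show colimit.ι (elProj γ ⋙ H.flip.obj t) (op (γ.elementsMk (op j) x)) ≫
      colimit.desc (elProj γ ⋙ H.flip.obj t) _ = _
  rw [colimit.ι_desc]

lemma coproj_jointly_surjective (γ : Jᵒᵖ ⥤ Type) (H : J ⥤ T ⥤ Type) (t : T)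
    (w : (pointwiseWColim γ H).obj t) :
    ∃ (j : J) (x : γ.obj (op j)) (k : (H.obj j).obj t), ((coproj γ H j x).app t) k = w := by
  obtain ⟨c, k, hk⟩ := Types.jointly_surjective' (F := elProj γ ⋙ H.flip.obj t) (show colimit (elProj γ ⋙ H.flip.obj t) from w)
  induction c using Opposite.rec with
  | op c =>
    obtain ⟨e, x⟩ := c
    induction e using Opposite.rec with
    | op j => exact ⟨j, x, k, hk⟩

lemma wcolim_hom_ext (γ : Jᵒᵖ ⥤ Type) (H : J ⥤ T ⥤ Type) {M : T ⥤ Type}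
    {f g : pointwiseWColim γ H ⟶ M}
    (h : ∀ (j : J) (x : γ.obj (op j)), coproj γ H j x ≫ f = coproj γ H j x ≫ g) : f = g := by
  apply NatTrans.ext
  funext t
  ext w
  obtain ⟨j, x, k, rfl⟩ := coproj_jointly_surjective γ H t w
  exact ConcreteCategory.congr_hom (congrArg (fun (n : H.obj j ⟶ M) => n.app t) (h j x)) k

/-- Restriction: inverse of `wdesc`. -/
noncomputable def wrestr (γ : Jᵒᵖ ⥤ Type) (H : J ⥤ T ⥤ Type) {M : T ⥤ Type}
    (f : pointwiseWColim γ H ⟶ M) : γ ⟶ natHom H M where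
  app j := TypeCat.ofHom fun x => coproj γ H j.unop x ≫ f
  naturality j j' u := by
    ext x
    show coproj γ H (unop j') (γ.map u x) ≫ f = H.map u.unop ≫ coproj γ H (unop j) x ≫ f
    rw [← Category.assoc, coproj_natural γ H u.unop x]
    rfl

lemma wdesc_wrestr (γ : Jᵒᵖ ⥤ Type) (H : J ⥤ T ⥤ Type) {M : T ⥤ Type}
    (f : pointwiseWColim γ H ⟶ M) : wdesc γ H (wrestr γ H f) = f := by
  apply wcolim_hom_ext
  intro j x
  rw [coproj_wdesc]
  rfl

lemma wrestr_wdesc (γ : Jᵒᵖ ⥤ Type) (H : J ⥤ T ⥤ Type) {M : T ⥤ Type}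
    (α : γ ⟶ natHom H M) : wrestr γ H (wdesc γ H α) = α := by
  apply NatTrans.ext
  funext j
  ext x
  exact coproj_wdesc γ H α j.unop x

end Toolkit
section Toolkit2
variable {J T : Type} [SmallCategory J] [SmallCategory T]

/-- Functoriality of the weighted colimit in the weight. -/
noncomputable def wmap (H : J ⥤ T ⥤ Type) {γ γ' : Jᵒᵖ ⥤ Type} (i : γ ⟶ γ') :
    pointwiseWColim γ H ⟶ pointwiseWColim γ' H :=
  wdesc γ H
    { app := fun j => TypeCat.ofHom fun x => coproj γ' H j.unop (i.app j x)
      naturality := fun j j' u => by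
        ext x
        show coproj γ' H (unop j') (i.app j' (γ.map u x))
            = H.map u.unop ≫ coproj γ' H (unop j) (i.app j x)
        rw [coproj_natural γ' H u.unop (i.app j x)]
        have : i.app j' (γ.map u x) = γ'.map u (i.app j x) := ConcreteCategory.congr_hom (i.naturality u) x
        rw [this]
        rfl }

lemma coproj_wmap (H : J ⥤ T ⥤ Type) {γ γ' : Jᵒᵖ ⥤ Type} (i : γ ⟶ γ') (j : J)
    (x : γ.obj (op j)) :
    coproj γ H j x ≫ wmap H i = coproj γ' H j (i.app (op j) x) :=
  coproj_wdesc γ H _ j x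

lemma wmap_id (H : J ⥤ T ⥤ Type) (γ : Jᵒᵖ ⥤ Type) :
    wmap H (𝟙 γ) = 𝟙 (pointwiseWColim γ H) := by
  apply wcolim_hom_ext
  intro j x
  rw [coproj_wmap, Category.comp_id]
  rfl

lemma wmap_comp (H : J ⥤ T ⥤ Type) {γ γ' γ'' : Jᵒᵖ ⥤ Type} (i : γ ⟶ γ') (i' : γ' ⟶ γ'') :
    wmap H (i ≫ i') = wmap H i ≫ wmap H i' := by
  apply wcolim_hom_ext
  intro j x
  rw [coproj_wmap, ← Category.assoc, coproj_wmap, coproj_wmap]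
  rfl

/-- Isomorphic weights give isomorphic weighted colimits. -/
noncomputable def wIso (H : J ⥤ T ⥤ Type) {γ γ' : Jᵒᵖ ⥤ Type} (i : γ ≅ γ') :
    pointwiseWColim γ H ≅ pointwiseWColim γ' H where
  hom := wmap H i.hom
  inv := wmap H i.inv
  hom_inv_id := by rw [← wmap_comp, i.hom_inv_id, wmap_id]
  inv_hom_id := by rw [← wmap_comp, i.inv_hom_id, wmap_id]

/-- The functor `j ↦ pointwiseWColim (K.obj j) H`. -/
@[reducible]
noncomputable def wColimFunctor {S : Type} [SmallCategory S] (K : J ⥤ Sᵒᵖ ⥤ Type)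
    (H : S ⥤ T ⥤ Type) : J ⥤ T ⥤ Type where
  obj j := pointwiseWColim (K.obj j) H
  map u := wmap H (K.map u)
  map_id j := by
    show wmap H (K.map (𝟙 j)) = _
    rw [K.map_id, wmap_id]
  map_comp u v := by
    show wmap H (K.map (u ≫ v)) = _
    rw [K.map_comp, wmap_comp]

/-- The weighted colimit with representable weight. -/
noncomputable def reprIso (H : J ⥤ T ⥤ Type) (j₀ : J) :
    pointwiseWColim (yoneda.obj j₀) H ≅ H.obj j₀ where
  hom := wdesc (yoneda.obj j₀) H
    { app := fun j => TypeCat.ofHom fun (u : j.unop ⟶ j₀) => H.map u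
      naturality := fun j j' t => by
        ext u
        show H.map (t.unop ≫ u) = H.map t.unop ≫ H.map u
        rw [H.map_comp] }
  inv := coproj (yoneda.obj j₀) H j₀ (𝟙 j₀)
  hom_inv_id := by
    apply wcolim_hom_ext
    intro j u
    rw [← Category.assoc, coproj_wdesc]
    show H.map u ≫ coproj (yoneda.obj j₀) H j₀ (𝟙 j₀) = _
    rw [coproj_natural (yoneda.obj j₀) H u (𝟙 j₀)]
    have : (yoneda.obj j₀).map u.op (𝟙 j₀) = u := Category.comp_id u
    rw [this, Category.comp_id]
  inv_hom_id := by
    rw [coproj_wdesc]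
    exact H.map_id j₀

/-- The canonical map from the colimit of representables weighted by `ψ` to `ψ`. -/
noncomputable def densityHom {D : Type} [SmallCategory D] (ψ : Dᵒᵖ ⥤ Type) :
    pointwiseWColim ψ yoneda ⟶ ψ :=
  wdesc ψ yoneda
    { app := fun j => TypeCat.ofHom fun x => yonedaEquiv.symm x
      naturality := fun j j' u => by
        ext x
        show yonedaEquiv.symm (ψ.map u x) = yoneda.map u.unop ≫ yonedaEquiv.symm x
        exact yonedaEquiv_symm_map u x }

lemma coproj_densityHom {D : Type} [SmallCategory D] (ψ : Dᵒᵖ ⥤ Type) (j : D)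
    (x : ψ.obj (op j)) :
    coproj ψ yoneda j x ≫ densityHom ψ = yonedaEquiv.symm x :=
  coproj_wdesc ψ yoneda _ j x

/-- The inverse of `densityHom`. -/
noncomputable def densityInv {D : Type} [SmallCategory D] (ψ : Dᵒᵖ ⥤ Type) :
    ψ ⟶ pointwiseWColim ψ yoneda where
  app j := TypeCat.ofHom fun x => (coproj ψ yoneda j.unop x).app j (𝟙 j.unop)
  naturality j j' u := by
    ext x
    show (coproj ψ yoneda (unop j') (ψ.map u x)).app j' (𝟙 (unop j'))
        = (pointwiseWColim ψ yoneda).map u ((coproj ψ yoneda (unop j) x).app j (𝟙 (unop j)))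
    have h1 : (coproj ψ yoneda (unop j') (ψ.map u x)).app j' (𝟙 (unop j'))
        = (coproj ψ yoneda (unop j) x).app j' (𝟙 (unop j') ≫ u.unop) :=
      (congrArg (fun (n : yoneda.obj (unop j') ⟶ pointwiseWColim ψ yoneda) =>
        n.app j' (𝟙 (unop j'))) (coproj_natural ψ yoneda u.unop x)).symm
    have h2 : (pointwiseWColim ψ yoneda).map u ((coproj ψ yoneda (unop j) x).app j (𝟙 (unop j)))
        = (coproj ψ yoneda (unop j) x).app j' (u.unop ≫ 𝟙 (unop j)) :=
      (ConcreteCategory.congr_hom ((coproj ψ yoneda (unop j) x).naturality u) (𝟙 (unop j))).symm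
    rw [h1, h2]
    congr 1
    simp

/-- Density: every presheaf is the canonical colimit of representables. -/
noncomputable def densityIso {D : Type} [SmallCategory D] (ψ : Dᵒᵖ ⥤ Type) :
    pointwiseWColim ψ yoneda ≅ ψ where
  hom := densityHom ψ
  inv := densityInv ψ
  hom_inv_id := by
    apply wcolim_hom_ext
    intro j x
    rw [← Category.assoc, coproj_densityHom, Category.comp_id]
    apply NatTrans.ext
    funext j'
    ext u
    have h1 : (coproj ψ yoneda j x).app j' (𝟙 (unop j') ≫ u)
        = (coproj ψ yoneda (unop j') (ψ.map u.op x)).app j' (𝟙 (unop j')) :=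
      congrArg (fun (n : yoneda.obj (unop j') ⟶ pointwiseWColim ψ yoneda) =>
        n.app j' (𝟙 (unop j'))) (coproj_natural ψ yoneda (u : unop j' ⟶ j) x)
    show (coproj ψ yoneda (unop j') (ψ.map u.op x)).app j' (𝟙 (unop j'))
        = (coproj ψ yoneda j x).app j' u
    rw [← h1]
    congr 1
    simp
  inv_hom_id := by
    apply NatTrans.ext
    funext j
    ext x
    have h1 : (densityHom ψ).app j ((coproj ψ yoneda (unop j) x).app j (𝟙 (unop j)))
        = (yonedaEquiv.symm x).app j (𝟙 (unop j)) :=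
      congrArg (fun (n : yoneda.obj (unop j) ⟶ ψ) => n.app j (𝟙 (unop j)))
        (coproj_densityHom ψ (unop j) x)
    show (densityHom ψ).app j ((coproj ψ yoneda (unop j) x).app j (𝟙 (unop j))) = x
    rw [h1]
    exact yonedaEquiv.apply_symm_apply x
end Toolkit2
section Assoc
variable {S J T : Type} [SmallCategory S] [SmallCategory J] [SmallCategory T]
variable (γ : Jᵒᵖ ⥤ Type) (K : J ⥤ Sᵒᵖ ⥤ Type) (H : S ⥤ T ⥤ Type)

/-- Auxiliary transformation for the associativity isomorphism. -/
noncomputable def assocB : γ ⟶ natHom K (natHom H (pointwiseWColim γ (wColimFunctor K H))) where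
  app j := TypeCat.ofHom fun x =>
    { app := fun s => TypeCat.ofHom fun k =>
        coproj (K.obj (unop j)) H (unop s) k ≫ coproj γ (wColimFunctor K H) (unop j) x
      naturality := fun s s' m => by
        ext k
        show coproj (K.obj (unop j)) H (unop s') ((K.obj (unop j)).map m k) ≫
              coproj γ (wColimFunctor K H) (unop j) x
            = H.map m.unop ≫ coproj (K.obj (unop j)) H (unop s) k ≫
              coproj γ (wColimFunctor K H) (unop j) x
        conv_rhs => rw [← Category.assoc, coproj_natural (K.obj (unop j)) H m.unop k]
        rfl }
  naturality j j' u := by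
    ext x
    apply NatTrans.ext
    funext s
    ext k
    show coproj (K.obj (unop j')) H (unop s) k ≫
          coproj γ (wColimFunctor K H) (unop j') (γ.map u.unop.op x)
        = coproj (K.obj (unop j)) H (unop s) ((K.map u.unop).app (op (unop s)) k) ≫
          coproj γ (wColimFunctor K H) (unop j) x
    rw [← coproj_natural γ (wColimFunctor K H) u.unop x, ← Category.assoc,
      show (wColimFunctor K H).map u.unop = wmap H (K.map u.unop) from rfl,
      coproj_wmap H (K.map u.unop) (unop s) k]

/-- The forward comparison for associativity. -/
noncomputable def assocA :
    pointwiseWColim γ K ⟶ natHom H (pointwiseWColim γ (wColimFunctor K H)) :=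
  wdesc γ K (assocB γ K H)

lemma assocA_app_coproj (j : J) (x : γ.obj (op j)) (s : Sᵒᵖ) (k : (K.obj j).obj s) :
    (assocA γ K H).app s ((coproj γ K j x).app s k)
      = coproj (K.obj j) H (unop s) k ≫ coproj γ (wColimFunctor K H) j x :=
  congrArg (fun (n : K.obj j ⟶ natHom H (pointwiseWColim γ (wColimFunctor K H))) =>
    n.app s k) (coproj_wdesc γ K (assocB γ K H) j x)

/-- Auxiliary transformation for the inverse. -/
noncomputable def assocSigma (j : J) (x : γ.obj (op j)) :
    K.obj j ⟶ natHom H (pointwiseWColim (pointwiseWColim γ K) H) where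
  app s := TypeCat.ofHom fun k => coproj (pointwiseWColim γ K) H (unop s) ((coproj γ K j x).app s k)
  naturality s s' m := by
    ext k
    show coproj (pointwiseWColim γ K) H (unop s') ((coproj γ K j x).app s' ((K.obj j).map m k))
        = H.map m.unop ≫
          coproj (pointwiseWColim γ K) H (unop s) ((coproj γ K j x).app s k)
    rw [coproj_natural (pointwiseWColim γ K) H m.unop ((coproj γ K j x).app s k)]
    exact congrArg (coproj (pointwiseWColim γ K) H (unop s'))
      (ConcreteCategory.congr_hom ((coproj γ K j x).naturality m) k)

lemma assocSigma_app (j : J) (x : γ.obj (op j)) (s : Sᵒᵖ) (k : (K.obj j).obj s) :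
    (assocSigma γ K H j x).app s k
      = coproj (pointwiseWColim γ K) H (unop s) ((coproj γ K j x).app s k) := rfl

/-- The inverse comparison for associativity. -/
noncomputable def assocInvA :
    γ ⟶ natHom (wColimFunctor K H) (pointwiseWColim (pointwiseWColim γ K) H) where
  app j := TypeCat.ofHom fun x => wdesc (K.obj (unop j)) H (assocSigma γ K H (unop j) x)
  naturality j j' u := by
    ext x
    show wdesc (K.obj (unop j')) H (assocSigma γ K H (unop j') (γ.map u x))
        = (wColimFunctor K H).map u.unop ≫ wdesc (K.obj (unop j)) H (assocSigma γ K H (unop j) x)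
    apply wcolim_hom_ext (K.obj (unop j')) H
    intro s k
    rw [coproj_wdesc]
    conv_rhs => rw [← Category.assoc,
      show (wColimFunctor K H).map u.unop = wmap H (K.map u.unop) from rfl,
      coproj_wmap H (K.map u.unop) s k, coproj_wdesc]
    rw [assocSigma_app, assocSigma_app]
    exact congrArg (coproj (pointwiseWColim γ K) H s)
      (congrArg (fun (n : K.obj (unop j') ⟶ pointwiseWColim γ K) => n.app (op s) k)
        (coproj_natural γ K u.unop x).symm)

lemma assocInvA_app (j : Jᵒᵖ) (x : γ.obj j) :
    (assocInvA γ K H).app j x = wdesc (K.obj (unop j)) H (assocSigma γ K H (unop j) x) := rfl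

/-- Associativity of weighted colimits. -/
noncomputable def assocIso :
    pointwiseWColim (pointwiseWColim γ K) H ≅ pointwiseWColim γ (wColimFunctor K H) where
  hom := wdesc (pointwiseWColim γ K) H (assocA γ K H)
  inv := wdesc γ (wColimFunctor K H) (assocInvA γ K H)
  hom_inv_id := by
    apply wcolim_hom_ext (pointwiseWColim γ K) H
    intro s w
    rw [Category.comp_id, ← Category.assoc, coproj_wdesc]
    obtain ⟨j, x, k, rfl⟩ := coproj_jointly_surjective γ K (op s) w
    rw [assocA_app_coproj γ K H j x (op s) k, Category.assoc, coproj_wdesc, assocInvA_app,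
      coproj_wdesc, assocSigma_app]
  inv_hom_id := by
    apply wcolim_hom_ext γ (wColimFunctor K H)
    intro j x
    rw [Category.comp_id, ← Category.assoc, coproj_wdesc, assocInvA_app]
    apply wcolim_hom_ext (K.obj j) H
    intro s k
    rw [← Category.assoc, coproj_wdesc, assocSigma_app, coproj_wdesc]
    exact assocA_app_coproj γ K H j x (op s) k

end Assoc
section Closure

/-- `Ψ(D)` is closed under weighted colimits with weights from any `Ψ(S)`. -/
theorem cocompletion_wcolim {Ψ : WeightClass} {S D : Type} [SmallCategory S] [SmallCategory D]
    {ψ : Sᵒᵖ ⥤ Type} (hψ : PsiCocompletion Ψ S ψ) :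
    ∀ H : S ⥤ Dᵒᵖ ⥤ Type, (∀ s : S, PsiCocompletion Ψ D (H.obj s)) →
      PsiCocompletion Ψ D (pointwiseWColim ψ H) := by
  induction hψ with
  | rep s₀ =>
    intro H hH
    exact .iso (hH s₀) ⟨(reprIso H s₀).symm⟩
  | iso hF i ih =>
    intro H hH
    exact .iso (ih H hH) ⟨wIso H i.some⟩
  | wcolim W hW K hK ih =>
    intro H hH
    exact .iso (.wcolim W hW (wColimFunctor K H) (fun m => ih m H hH))
      ⟨(assocIso W.w K H).symm⟩

theorem sat_cocompletion_le {Ψ : WeightClass} {D : Type} [SmallCategory D]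
    {F : Dᵒᵖ ⥤ Type} (hF : PsiCocompletion (saturation Ψ) D F) : PsiCocompletion Ψ D F := by
  induction hF with
  | rep d => exact .rep d
  | iso hF i ih => exact .iso ih i
  | wcolim W hW H hH ih => exact cocompletion_wcolim hW H ih

theorem sat_locallySmall {Ψ : WeightClass} (hls : IsLocallySmall Ψ) :
    IsLocallySmall (saturation Ψ) := by
  intro D _
  obtain ⟨ι, f, h⟩ := hls D
  exact ⟨ι, f, fun F hF => h F (sat_cocompletion_le hF)⟩

/-- Each weight of `Ψ` lies in the corresponding free `Ψ`-cocompletion. -/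
theorem psi_le_sat {Ψ : WeightClass} {W : Weight} (hW : Ψ W) : saturation Ψ W :=
  PsiCocompletion.iso (.wcolim W hW yoneda (fun j => .rep j)) ⟨densityIso W.w⟩

end Closure
section Helpers

lemma map_iso_bijective {C : Type*} [Category C] (H : C ⥤ Type) {A B : C} (m : A ≅ B) :
    Function.Bijective (H.map m.hom) := by
  rw [Function.bijective_iff_has_inverse]
  refine ⟨H.map m.inv, fun z => ?_, fun z => ?_⟩
  · rw [← FunctorToTypes.map_comp_apply, m.hom_inv_id, FunctorToTypes.map_id_apply]
  · rw [← FunctorToTypes.map_comp_apply, m.inv_hom_id, FunctorToTypes.map_id_apply]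

lemma precomp_bijective {C : Type*} [Category C] {A B M : C} (i : A ≅ B) :
    Function.Bijective (fun (α : B ⟶ M) => i.hom ≫ α) := by
  rw [Function.bijective_iff_has_inverse]
  refine ⟨fun β => i.inv ≫ β, fun α => ?_, fun β => ?_⟩
  · show i.inv ≫ i.hom ≫ α = α
    rw [← Category.assoc, i.inv_hom_id, Category.id_comp]
  · show i.hom ≫ i.inv ≫ β = β
    rw [← Category.assoc, i.hom_inv_id, Category.id_comp]

lemma postcomp_bijective {C : Type*} [Category C] {A B M : C} (i : A ≅ B) :
    Function.Bijective (fun (α : M ⟶ A) => α ≫ i.hom) := by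
  rw [Function.bijective_iff_has_inverse]
  refine ⟨fun β => β ≫ i.inv, fun α => ?_, fun β => ?_⟩
  · show (α ≫ i.hom) ≫ i.inv = α
    rw [Category.assoc, i.hom_inv_id, Category.comp_id]
  · show (β ≫ i.inv) ≫ i.hom = β
    rw [Category.assoc, i.inv_hom_id, Category.comp_id]

lemma bij_cancel {α β δ : Type*} {f : α → β} {g : β → δ}
    (hf : Function.Bijective f) (hgf : Function.Bijective (g ∘ f)) : Function.Bijective g := by
  constructor
  · intro a b hab
    obtain ⟨a', rfl⟩ := hf.2 a
    obtain ⟨b', rfl⟩ := hf.2 b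
    rw [hgf.1 hab]
  · intro c
    obtain ⟨a, ha⟩ := hgf.2 c
    exact ⟨f a, ha⟩

end Helpers

section CompRep
variable {D E : Type} [SmallCategory D] [SmallCategory E]

/-- The canonical map `G(d₀) ⟶ wLim (yoneda.obj d₀) G`. -/
def repInv (G : Dᵒᵖ ⥤ E ⥤ Type) (d₀ : D) : G.obj (op d₀) ⟶ wLim (yoneda.obj d₀) G where
  app e := TypeCat.ofHom fun g =>
    { app := fun d => TypeCat.ofHom fun (u : unop d ⟶ d₀) => (G.map u.op).app e g
      naturality := fun d d' m => by
        ext u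
        show (G.map ((m.unop ≫ u).op)).app e g = (G.map m).app e ((G.map u.op).app e g)
        rw [show ((m.unop ≫ u).op) = u.op ≫ m from rfl, G.map_comp]
        rfl }
  naturality e e' f := by
    ext g
    apply NatTrans.ext
    funext d
    ext u
    exact ConcreteCategory.congr_hom ((G.map u.op).naturality f) g

lemma repInv_eval (G : Dᵒᵖ ⥤ E ⥤ Type) (d₀ : D) :
    wLimEval (yoneda.obj d₀) G (op d₀) (𝟙 d₀) ≫ repInv G d₀ = 𝟙 (wLim (yoneda.obj d₀) G) := by
  apply NatTrans.ext
  funext e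
  ext α
  apply NatTrans.ext
  funext d
  ext u
  have h := ConcreteCategory.congr_hom (α.naturality u.op) (𝟙 d₀)
  exact h.symm.trans (congrArg (α.app d) (Category.comp_id u))

lemma eval_repInv (G : Dᵒᵖ ⥤ E ⥤ Type) (d₀ : D) (d : Dᵒᵖ) (u : unop d ⟶ d₀) :
    repInv G d₀ ≫ wLimEval (yoneda.obj d₀) G d u = G.map u.op := by
  apply NatTrans.ext
  funext e
  ext g
  rfl

lemma comp_rep (H : (E ⥤ Type) ⥤ Type) (G : Dᵒᵖ ⥤ E ⥤ Type) (d₀ : D) :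
    Function.Bijective (wLimComparison H (yoneda.obj d₀) G) := by
  rw [Function.bijective_iff_has_inverse]
  refine ⟨fun α => H.map (repInv G d₀) (α.app (op d₀) (𝟙 d₀)), fun z => ?_, fun α => ?_⟩
  · show H.map (repInv G d₀) (H.map (wLimEval (yoneda.obj d₀) G (op d₀) (𝟙 d₀)) z) = z
    rw [← FunctorToTypes.map_comp_apply, repInv_eval, FunctorToTypes.map_id_apply]
  · apply NatTrans.ext
    funext d
    ext u
    show H.map (wLimEval (yoneda.obj d₀) G d u)
        (H.map (repInv G d₀) (α.app (op d₀) (𝟙 d₀))) = α.app d u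
    rw [← FunctorToTypes.map_comp_apply, eval_repInv]
    have h := ConcreteCategory.congr_hom (α.naturality u.op) (𝟙 d₀)
    exact h.symm.trans (congrArg (α.app d) (Category.comp_id u))

/-- Precomposition with a map of weights. -/
def wLimPre {ψ ψ' : Dᵒᵖ ⥤ Type} (i : ψ ⟶ ψ') (G : Dᵒᵖ ⥤ E ⥤ Type) :
    wLim ψ' G ⟶ wLim ψ G where
  app e := TypeCat.ofHom fun α => i ≫ α
  naturality e e' f := by
    ext (α : _ ⟶ G.flip.obj e)
    show i ≫ α ≫ G.flip.map f = (i ≫ α) ≫ G.flip.map f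
    rw [Category.assoc]

lemma comp_square (H : (E ⥤ Type) ⥤ Type) {ψ ψ' : Dᵒᵖ ⥤ Type} (i : ψ ⟶ ψ')
    (G : Dᵒᵖ ⥤ E ⥤ Type) (z : H.obj (wLim ψ' G)) :
    wLimComparison H ψ G (H.map (wLimPre i G) z) = i ≫ wLimComparison H ψ' G z := by
  apply NatTrans.ext
  funext d
  ext y
  show H.map (wLimEval ψ G d y) (H.map (wLimPre i G) z)
      = H.map (wLimEval ψ' G d (i.app d y)) z
  rw [← FunctorToTypes.map_comp_apply,
    show wLimPre i G ≫ wLimEval ψ G d y = wLimEval ψ' G d (i.app d y) from by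
      apply NatTrans.ext; funext e; ext α; rfl]

/-- The precomposition isomorphism from an isomorphism of weights. -/
def wLimPreIso {ψ ψ' : Dᵒᵖ ⥤ Type} (i : ψ ≅ ψ') (G : Dᵒᵖ ⥤ E ⥤ Type) :
    wLim ψ' G ≅ wLim ψ G where
  hom := wLimPre i.hom G
  inv := wLimPre i.inv G
  hom_inv_id := by
    apply NatTrans.ext
    funext e
    ext (α : _ ⟶ G.flip.obj e)
    show i.inv ≫ i.hom ≫ α = α
    rw [← Category.assoc, i.inv_hom_id, Category.id_comp]
  inv_hom_id := by
    apply NatTrans.ext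
    funext e
    ext (α : _ ⟶ G.flip.obj e)
    show i.hom ≫ i.inv ≫ α = α
    rw [← Category.assoc, i.hom_inv_id, Category.id_comp]

lemma comp_of_iso (H : (E ⥤ Type) ⥤ Type) {ψ ψ' : Dᵒᵖ ⥤ Type} (i : ψ ≅ ψ')
    (G : Dᵒᵖ ⥤ E ⥤ Type) (h : Function.Bijective (wLimComparison H ψ G)) :
    Function.Bijective (wLimComparison H ψ' G) := by
  have hsq : wLimComparison H ψ' G ∘ H.map (wLimPre i.inv G)
      = (fun α => i.inv ≫ α) ∘ wLimComparison H ψ G :=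
    funext fun z => comp_square H i.inv G z
  apply bij_cancel (f := H.map (wLimPre i.inv G))
  · exact map_iso_bijective H (wLimPreIso i.symm G)
  · rw [hsq]
    exact (precomp_bijective (M := G ⋙ H) i.symm).comp h

end CompRep
section CompWColim
variable {J D E : Type} [SmallCategory J] [SmallCategory D] [SmallCategory E]

/-- The functor `j ↦ wLim (K.obj j) G`. -/
@[reducible]
def WLfun (K : J ⥤ Dᵒᵖ ⥤ Type) (G : Dᵒᵖ ⥤ E ⥤ Type) : Jᵒᵖ ⥤ E ⥤ Type where
  obj j := wLim (K.obj (unop j)) G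
  map {j j'} u :=
    { app := fun e => TypeCat.ofHom fun α => K.map u.unop ≫ α
      naturality := fun e e' f => by
        ext (α : _ ⟶ G.flip.obj e)
        show K.map u.unop ≫ α ≫ G.flip.map f = (K.map u.unop ≫ α) ≫ G.flip.map f
        rw [Category.assoc] }
  map_id j := by
    apply NatTrans.ext
    funext e
    ext (α : _ ⟶ G.flip.obj e)
    show K.map (𝟙 (unop j)) ≫ α = α
    rw [K.map_id, Category.id_comp]
  map_comp u v := by
    apply NatTrans.ext
    funext e
    ext (α : _ ⟶ G.flip.obj e)
    show K.map (v.unop ≫ u.unop) ≫ α = K.map v.unop ≫ K.map u.unop ≫ α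
    rw [K.map_comp, Category.assoc]

/-- `wLim (pointwiseWColim γ K) G ≅ wLim γ (WLfun K G)`. -/
noncomputable def wLimColimIso (γ : Jᵒᵖ ⥤ Type) (K : J ⥤ Dᵒᵖ ⥤ Type) (G : Dᵒᵖ ⥤ E ⥤ Type) :
    wLim (pointwiseWColim γ K) G ≅ wLim γ (WLfun K G) where
  hom :=
    { app := fun e => TypeCat.ofHom fun β => wrestr γ K β
      naturality := fun e e' f => by
        ext (β : _ ⟶ G.flip.obj e)
        apply NatTrans.ext
        funext j
        ext x
        show coproj γ K (unop j) x ≫ β ≫ G.flip.map f = (coproj γ K (unop j) x ≫ β) ≫ G.flip.map f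
        rw [Category.assoc] }
  inv :=
    { app := fun e => TypeCat.ofHom fun α => wdesc γ K α
      naturality := fun e e' f => by
        ext (α : _ ⟶ (WLfun K G).flip.obj e)
        show wdesc γ K (α ≫ (WLfun K G).flip.map f) = wdesc γ K α ≫ G.flip.map f
        apply wcolim_hom_ext γ K
        intro j x
        rw [coproj_wdesc, ← Category.assoc]
        erw [coproj_wdesc]
        rfl }
  hom_inv_id := by
    apply NatTrans.ext
    funext e
    ext β
    exact wdesc_wrestr γ K β
  inv_hom_id := by
    apply NatTrans.ext
    funext e
    ext α
    exact wrestr_wdesc γ K α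

/-- The comparison transformation assembled from the inductive hypotheses. -/
noncomputable def thetaIso (H : (E ⥤ Type) ⥤ Type) (K : J ⥤ Dᵒᵖ ⥤ Type) (G : Dᵒᵖ ⥤ E ⥤ Type)
    (hK : ∀ j : J, Function.Bijective (wLimComparison H (K.obj j) G)) :
    (WLfun K G ⋙ H) ≅ natHom K (G ⋙ H) :=
  NatIso.ofComponents
    (fun j => (Equiv.ofBijective (wLimComparison H (K.obj (unop j)) G) (hK (unop j))).toIso)
    (by
      intro j j' u
      ext z
      apply NatTrans.ext
      funext d
      ext y
      show H.map (wLimEval (K.obj (unop j')) G d y) (H.map ((WLfun K G).map u) z)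
          = H.map (wLimEval (K.obj (unop j)) G d ((K.map u.unop).app d y)) z
      rw [← FunctorToTypes.map_comp_apply,
        show (WLfun K G).map u ≫ wLimEval (K.obj (unop j')) G d y
            = wLimEval (K.obj (unop j)) G d ((K.map u.unop).app d y) from by
          apply NatTrans.ext; funext e; ext α; rfl])

lemma comp_wcolim (H : (E ⥤ Type) ⥤ Type) (γ : Jᵒᵖ ⥤ Type) (K : J ⥤ Dᵒᵖ ⥤ Type)
    (G : Dᵒᵖ ⥤ E ⥤ Type)
    (hγ : Function.Bijective (wLimComparison H γ (WLfun K G)))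
    (hK : ∀ j : J, Function.Bijective (wLimComparison H (K.obj j) G)) :
    Function.Bijective (wLimComparison H (pointwiseWColim γ K) G) := by
  set θ := thetaIso H K G hK with hθ
  set ivs := wLimColimIso γ K G with hivs
  have key : ∀ z : H.obj (wLim γ (WLfun K G)),
      wLimComparison H (pointwiseWColim γ K) G (H.map ivs.inv z)
        = wdesc γ K (wLimComparison H γ (WLfun K G) z ≫ θ.hom) := by
    intro z
    apply NatTrans.ext
    funext d
    ext y
    obtain ⟨j, x, k, rfl⟩ := coproj_jointly_surjective γ K d y
    have e2 : ivs.inv ≫ wLimEval (pointwiseWColim γ K) G d ((coproj γ K j x).app d k)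
        = wLimEval γ (WLfun K G) (op j) x ≫ wLimEval (K.obj j) G d k := by
      apply NatTrans.ext
      funext e
      ext α
      exact congrArg (fun (n : K.obj j ⟶ G.flip.obj e) => n.app d k) (coproj_wdesc γ K α j x)
    calc
      H.map (wLimEval (pointwiseWColim γ K) G d ((coproj γ K j x).app d k)) (H.map ivs.inv z)
          = H.map (ivs.inv ≫ wLimEval (pointwiseWColim γ K) G d ((coproj γ K j x).app d k)) z :=
        (FunctorToTypes.map_comp_apply H _ _ z).symm
      _ = H.map (wLimEval γ (WLfun K G) (op j) x ≫ wLimEval (K.obj j) G d k) z := by rw [e2]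
      _ = H.map (wLimEval (K.obj j) G d k) (H.map (wLimEval γ (WLfun K G) (op j) x) z) :=
        FunctorToTypes.map_comp_apply H _ _ z
      _ = (wdesc γ K (wLimComparison H γ (WLfun K G) z ≫ θ.hom)).app d
            ((coproj γ K j x).app d k) :=
        (congrArg (fun (n : K.obj j ⟶ G ⋙ H) => n.app d k)
          (coproj_wdesc γ K (wLimComparison H γ (WLfun K G) z ≫ θ.hom) j x)).symm
  have hcomp : wLimComparison H (pointwiseWColim γ K) G ∘ H.map ivs.inv
      = (fun α => wdesc γ K α) ∘ (fun α => α ≫ θ.hom) ∘ wLimComparison H γ (WLfun K G) :=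
    funext key
  apply bij_cancel (f := H.map ivs.inv)
  · exact map_iso_bijective H ivs.symm
  · rw [hcomp]
    have hdesc : Function.Bijective (fun (α : γ ⟶ natHom K (G ⋙ H)) => wdesc γ K α) :=
      Function.bijective_iff_has_inverse.mpr
        ⟨wrestr γ K, wrestr_wdesc γ K, wdesc_wrestr γ K⟩
    exact hdesc.comp ((postcomp_bijective θ).comp hγ)

end CompWColim
section Final

theorem flat_of_cocompletion {Ψ : WeightClass} {E : Type} [SmallCategory E] {φ : Eᵒᵖ ⥤ Type}
    (hφ : IsFlat Ψ φ) {D : Type} [SmallCategory D] {ψ : Dᵒᵖ ⥤ Type}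
    (hψ : PsiCocompletion Ψ D ψ) :
    ∀ G : Dᵒᵖ ⥤ E ⥤ Type, Function.Bijective (wLimComparison (wColim φ) ψ G) := by
  induction hψ with
  | rep d => exact fun G => comp_rep (wColim φ) G d
  | iso hF i ih => exact fun G => comp_of_iso (wColim φ) i.some G (ih G)
  | wcolim W hW K hK ih =>
    exact fun G => comp_wcolim (wColim φ) W.w K G (hφ W hW (WLfun K G)) (fun j => ih j G)

theorem sat_sound {Ψ : WeightClass} (hs : IsSound Ψ) : IsSound (saturation Ψ) := by
  intro E _ φ hyp
  have hφ : IsFlat Ψ φ := hs E φ (fun W hW T => hyp W (psi_le_sat hW) T)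
  intro W hW G
  exact flat_of_cocompletion hφ hW G

end Final

/-- If `Ψ` is locally small and sound, then so is its
saturation `Ψ*`. -/
theorem saturation_locallySmall_sound (Ψ : WeightClass)
    (hls : IsLocallySmall Ψ) (hs : IsSound Ψ) :
    IsLocallySmall (saturation Ψ) ∧ IsSound (saturation Ψ) := by
  exact ⟨sat_locallySmall hls, sat_sound hs⟩

end Paper
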